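/- With β_a the Busemann function of a Gromov boundary point a in a δ-hyperbolic geodesic space, for all x, y one has |β_a(x,y) + β_a(y,x)| ≤ 120δ, and for all x, y, z one has |β_a(x,y) + β_a(y,z) − β_a(x,z)| ≤ 200δ. -/
import Mathlib


open scoped NNReal

/-- δ-hyperbolicity via the Gromov four-point condition. -/
def IsDeltaHyperbolic (X : Type*) [MetricSpace X] (δ : ℝ) : Prop :=
  ∀ x y z w : X,
    dist x y + dist z w ≤ max (dist x z + dist y w) (dist x w + dist y z) + 2 * δ

/-- A geodesic metric space. -/
def IsGeodesicSpace (X : Type*) [MetricSpace X] : Prop :=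
  ∀ x y : X, ∃ f : ℝ → X, f 0 = x ∧ f (dist x y) = y ∧
    ∀ s t : ℝ, s ∈ Set.Icc 0 (dist x y) → t ∈ Set.Icc 0 (dist x y) →
      dist (f s) (f t) = |s - t|

/-- A geodesic ray, parametrized by `ℝ≥0`. -/
def IsGeodesicRay {X : Type*} [MetricSpace X] (g : ℝ≥0 → X) : Prop :=
  ∀ s t : ℝ≥0, dist (g s) (g t) = |(s : ℝ) - (t : ℝ)|

/-- `β_a(x, h) = limsup_{t→∞} (d(x, h(t)) - t)` for a geodesic ray `h`. -/
noncomputable def busemannRay {X : Type*} [MetricSpace X] (x : X) (h : ℝ≥0 → X) : ℝ :=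
  Filter.limsup (fun t : ℝ≥0 => dist x (h t) - (t : ℝ)) Filter.atTop

/-- `h` is a geodesic ray from `y` to the boundary point determined by the
reference geodesic ray `a` (finite Hausdorff distance between the images). -/
def RayTo {X : Type*} [MetricSpace X] (y : X) (a : ℝ≥0 → X) (h : ℝ≥0 → X) : Prop :=
  IsGeodesicRay h ∧ h 0 = y ∧
    EMetric.hausdorffEdist (Set.range h) (Set.range a) ≠ ⊤

/-- The Busemann function `β_a(x, y) = sup_{h ∈ L(y,a)} limsup_{t→∞}(d(x,h(t)) − t)`. -/
noncomputable def busemann {X : Type*} [MetricSpace X] (a : ℝ≥0 → X) (x y : X) : ℝ :=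
  sSup (busemannRay x '' {h : ℝ≥0 → X | RayTo y a h})

open Filter

section GP

variable {X : Type*} [MetricSpace X]

/-- Gromov product. -/
noncomputable def gp (p u v : X) : ℝ := (dist p u + dist p v - dist u v) / 2

lemma gp_nonneg (p u v : X) : 0 ≤ gp p u v := by
  have h := dist_triangle u p v
  unfold gp
  rw [dist_comm u p] at h
  linarith

lemma gp_le_left (p u v : X) : gp p u v ≤ dist p u := by
  have h := dist_triangle p u v
  unfold gp
  linarith

lemma gp_comm (p u v : X) : gp p u v = gp p v u := by
  unfold gp
  rw [dist_comm u v]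
  ring

lemma gp_ge (p u v : X) : dist p u - dist u v ≤ gp p u v := by
  have h := dist_triangle p v u
  unfold gp
  rw [dist_comm v u] at h
  linarith

lemma gp_base_change (p q u v : X) : gp q u v - dist p q ≤ gp p u v := by
  have h1 := dist_triangle q p u
  have h2 := dist_triangle q p v
  rw [dist_comm q p] at h1 h2
  unfold gp
  linarith

lemma gp_hyp {δ : ℝ} (hhyp : IsDeltaHyperbolic X δ) (p u v w : X) :
    min (gp p u w) (gp p v w) - δ ≤ gp p u v := by
  have H := hhyp u v p w
  have e1 : dist u p = dist p u := dist_comm u p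
  have e2 : dist v p = dist p v := dist_comm v p
  rcases max_cases (dist u p + dist v w) (dist u w + dist v p) with ⟨he, _⟩ | ⟨he, _⟩ <;>
    rw [he] at H
  · have key : gp p v w - δ ≤ gp p u v := by unfold gp; linarith
    have := min_le_right (gp p u w) (gp p v w)
    linarith
  · have key : gp p u w - δ ≤ gp p u v := by unfold gp; linarith
    have := min_le_left (gp p u w) (gp p v w)
    linarith

lemma ray_dist_zero {g : ℝ≥0 → X} (hg : IsGeodesicRay g) (t : ℝ≥0) :
    dist (g 0) (g t) = (t : ℝ) := by
  rw [hg 0 t, NNReal.coe_zero, zero_sub, abs_neg, abs_of_nonneg t.coe_nonneg]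

lemma exists_near {h a : ℝ≥0 → X}
    (hne : EMetric.hausdorffEdist (Set.range h) (Set.range a) ≠ ⊤) :
    ∃ K : ℝ, 0 ≤ K ∧ ∀ s : ℝ≥0, ∃ σ : ℝ≥0, dist (h s) (a σ) ≤ K := by
  refine ⟨(EMetric.hausdorffEdist (Set.range h) (Set.range a) + 1).toReal,
    ENNReal.toReal_nonneg, fun s => ?_⟩
  have h1 : EMetric.infEdist (h s) (Set.range a) <
      EMetric.hausdorffEdist (Set.range h) (Set.range a) + 1 :=
    lt_of_le_of_lt (EMetric.infEdist_le_hausdorffEdist_of_mem (Set.mem_range_self s))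
      (ENNReal.lt_add_right hne one_ne_zero)
  obtain ⟨v, ⟨σ, rfl⟩, hv⟩ := EMetric.infEdist_lt_iff.mp h1
  refine ⟨σ, ?_⟩
  rw [dist_edist]
  exact ENNReal.toReal_mono (ENNReal.add_ne_top.mpr ⟨hne, ENNReal.one_ne_top⟩) hv.le

lemma gp_blowup {δ : ℝ} (hδ : 0 ≤ δ) (hhyp : IsDeltaHyperbolic X δ)
    {a : ℝ≥0 → X} (ha : IsGeodesicRay a) {y z : X} {h k : ℝ≥0 → X}
    (hh : RayTo y a h) (hk : RayTo z a k) (p : X) :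
    ∃ C : ℝ, ∀ s t : ℝ≥0, min (s : ℝ) (t : ℝ) - C ≤ gp p (h s) (k t) := by
  obtain ⟨K₁, hK₁0, hK₁⟩ := exists_near hh.2.2
  obtain ⟨K₂, hK₂0, hK₂⟩ := exists_near hk.2.2
  refine ⟨dist p y + dist p z + dist p (a 0) + dist y (a 0) + dist z (a 0) + K₁ + K₂ + 2 * δ,
    fun s t => ?_⟩
  obtain ⟨σ, hσ⟩ := hK₁ s
  obtain ⟨τ, hτ⟩ := hK₂ t
  have hys : dist y (h s) = (s : ℝ) := by
    have := ray_dist_zero hh.1 s; rwa [hh.2.1] at this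
  have hzt : dist z (k t) = (t : ℝ) := by
    have := ray_dist_zero hk.1 t; rwa [hk.2.1] at this
  have ha0σ : dist (a 0) (a σ) = (σ : ℝ) := ray_dist_zero ha σ
  have ha0τ : dist (a 0) (a τ) = (τ : ℝ) := ray_dist_zero ha τ
  -- lower bounds on σ and τ
  have hσlb : (s : ℝ) - dist y (a 0) - K₁ ≤ (σ : ℝ) := by
    have h4 := dist_triangle4 y (a 0) (a σ) (h s)
    rw [hys, ha0σ, dist_comm (a σ) (h s)] at h4
    linarith
  have hτlb : (t : ℝ) - dist z (a 0) - K₂ ≤ (τ : ℝ) := by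
    have h4 := dist_triangle4 z (a 0) (a τ) (k t)
    rw [hzt, ha0τ, dist_comm (a τ) (k t)] at h4
    linarith
  have m1 : min (s : ℝ) (t : ℝ) ≤ (s : ℝ) := min_le_left _ _
  have m2 : min (s : ℝ) (t : ℝ) ≤ (t : ℝ) := min_le_right _ _
  have dpy : (0:ℝ) ≤ dist p y := dist_nonneg
  have dpz : (0:ℝ) ≤ dist p z := dist_nonneg
  have dpa : (0:ℝ) ≤ dist p (a 0) := dist_nonneg
  have dya : (0:ℝ) ≤ dist y (a 0) := dist_nonneg
  have dza : (0:ℝ) ≤ dist z (a 0) := dist_nonneg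
  -- three basic gp lower bounds
  have A1 : (s : ℝ) - dist p y - K₁ ≤ gp p (h s) (a σ) := by
    have hg := gp_ge p (h s) (a σ)
    have ht := dist_triangle y p (h s)
    rw [hys, dist_comm y p] at ht
    linarith
  have A3 : (t : ℝ) - dist p z - K₂ ≤ gp p (a τ) (k t) := by
    have hg := gp_ge p (k t) (a τ)
    have ht := dist_triangle z p (k t)
    rw [hzt, dist_comm z p] at ht
    rw [gp_comm p (a τ) (k t)]
    linarith
  have A2 : min (σ : ℝ) (τ : ℝ) - dist p (a 0) ≤ gp p (a σ) (a τ) := by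
    have hbase : gp (a 0) (a σ) (a τ) = min (σ : ℝ) (τ : ℝ) := by
      unfold gp
      rw [ha0σ, ha0τ, ha σ τ]
      rcases le_total (σ : ℝ) (τ : ℝ) with hc | hc
      · rw [abs_of_nonpos (by linarith), min_eq_left hc]; ring
      · rw [abs_of_nonneg (by linarith), min_eq_right hc]; ring
    have := gp_base_change p (a 0) (a σ) (a τ)
    rw [hbase] at this
    linarith
  -- combine with hyperbolicity
  have S1 : min (gp p (a σ) (a τ)) (gp p (k t) (a τ)) - δ ≤ gp p (a σ) (k t) :=
    gp_hyp hhyp p (a σ) (k t) (a τ)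
  have S2 : min (gp p (h s) (a σ)) (gp p (k t) (a σ)) - δ ≤ gp p (h s) (k t) :=
    gp_hyp hhyp p (h s) (k t) (a σ)
  set C : ℝ := dist p y + dist p z + dist p (a 0) + dist y (a 0) + dist z (a 0) + K₁ + K₂ + 2 * δ
    with hC
  have hminστ : min (s : ℝ) (t : ℝ) - C + 2 * δ + dist p (a 0) ≤ min (σ : ℝ) (τ : ℝ) :=
    le_min (by linarith) (by linarith)
  have B1 : min (s : ℝ) (t : ℝ) - C + 2 * δ ≤ min (gp p (a σ) (a τ)) (gp p (k t) (a τ)) :=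
    le_min (by linarith) (by
      rw [gp_comm]
      linarith)
  have B2 : min (s : ℝ) (t : ℝ) - C + δ ≤ min (gp p (h s) (a σ)) (gp p (k t) (a σ)) :=
    le_min (by linarith) (by
      rw [gp_comm]
      linarith)
  linarith

lemma gp_bddAbove (p x : X) (u : ℝ≥0 → X) :
    IsBoundedUnder (· ≤ ·) (atTop : Filter ℝ≥0) (fun t => gp p x (u t)) :=
  isBoundedUnder_of ⟨dist p x, fun t => gp_le_left p x (u t)⟩

lemma gp_bddBelow (p x : X) (u : ℝ≥0 → X) :
    IsBoundedUnder (· ≥ ·) (atTop : Filter ℝ≥0) (fun t => gp p x (u t)) :=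
  isBoundedUnder_of ⟨0, fun t => gp_nonneg p x (u t)⟩

/-- The key comparison lemma for Gromov products along two asymptotic rays. -/
lemma gp_cmp {δ : ℝ} (hδ : 0 ≤ δ) (hhyp : IsDeltaHyperbolic X δ)
    {a : ℝ≥0 → X} (ha : IsGeodesicRay a) {y z : X} {h k : ℝ≥0 → X}
    (hh : RayTo y a h) (hk : RayTo z a k) (p x : X) :
    limsup (fun t => gp p x (k t)) atTop ≤ liminf (fun t => gp p x (h t)) atTop + δ := by
  obtain ⟨C, hC⟩ := gp_blowup hδ hhyp ha hk hh p
  set N : ℝ≥0 := Real.toNNReal (C + dist p x) with hN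
  have key : ∀ s : ℝ≥0, N ≤ s → ∀ t : ℝ≥0, N ≤ t → gp p x (k s) - δ ≤ gp p x (h t) := by
    intro s hs t ht
    have h1 := hC s t
    have hNs : C + dist p x ≤ (s : ℝ) :=
      le_trans (Real.le_coe_toNNReal _) (NNReal.coe_le_coe.mpr hs)
    have hNt : C + dist p x ≤ (t : ℝ) :=
      le_trans (Real.le_coe_toNNReal _) (NNReal.coe_le_coe.mpr ht)
    have h2 : dist p x ≤ gp p (k s) (h t) := by
      have : C + dist p x ≤ min (s : ℝ) (t : ℝ) := le_min hNs hNt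
      linarith
    have h3 := gp_hyp hhyp p x (h t) (k s)
    have h4 : gp p x (k s) ≤ min (gp p x (k s)) (gp p (h t) (k s)) :=
      le_min le_rfl (by rw [gp_comm p (h t) (k s)]; linarith [gp_le_left p x (k s)])
    linarith
  apply Filter.limsup_le_of_le ((gp_bddBelow p x k).isCoboundedUnder_le)
  filter_upwards [eventually_ge_atTop N] with s hs
  have hstep : gp p x (k s) - δ ≤ liminf (fun t => gp p x (h t)) atTop := by
    apply Filter.le_liminf_of_le ((gp_bddAbove p x h).isCoboundedUnder_ge)
    filter_upwards [eventually_ge_atTop N] with t ht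
    exact key s hs t ht
  linarith

lemma liminf_two_mul (f : ℝ≥0 → ℝ)
    (cobdd : Filter.IsCoboundedUnder (· ≥ ·) (atTop : Filter ℝ≥0) f)
    (bdd : Filter.IsBoundedUnder (· ≥ ·) (atTop : Filter ℝ≥0) f) :
    Filter.liminf (fun t => 2 * f t) (atTop : Filter ℝ≥0) = 2 * Filter.liminf f atTop :=
  (Monotone.map_limsInf_of_continuousAt (F := Filter.map f atTop)
    (f := fun x : ℝ => 2 * x) (fun _ _ hab => by dsimp only; linarith)
    ((continuous_const.mul continuous_id).continuousAt) cobdd bdd).symm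

lemma limsup_two_mul (f : ℝ≥0 → ℝ)
    (bdd : Filter.IsBoundedUnder (· ≤ ·) (atTop : Filter ℝ≥0) f)
    (cobdd : Filter.IsCoboundedUnder (· ≤ ·) (atTop : Filter ℝ≥0) f) :
    Filter.limsup (fun t => 2 * f t) (atTop : Filter ℝ≥0) = 2 * Filter.limsup f atTop :=
  (Monotone.map_limsSup_of_continuousAt (F := Filter.map f atTop)
    (f := fun x : ℝ => 2 * x) (fun _ _ hab => by dsimp only; linarith)
    ((continuous_const.mul continuous_id).continuousAt) bdd cobdd).symm

/-- Busemann function of a ray, in terms of Gromov products. -/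
lemma busemannRay_eq {a : ℝ≥0 → X} {y : X} {h : ℝ≥0 → X} (hh : RayTo y a h) (x : X) :
    busemannRay x h = dist x y - 2 * liminf (fun t => gp y x (h t)) atTop := by
  have hfun : (fun t : ℝ≥0 => dist x (h t) - (t : ℝ))
      = fun t => dist x y - 2 * gp y x (h t) := by
    funext t
    have hyt : dist y (h t) = (t : ℝ) := by
      have := ray_dist_zero hh.1 t; rwa [hh.2.1] at this
    unfold gp
    rw [dist_comm y x, hyt]
    ring
  have hb1 : IsBoundedUnder (· ≥ ·) (atTop : Filter ℝ≥0) (fun t => 2 * gp y x (h t)) :=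
    isBoundedUnder_of ⟨0, fun t => by
      show 2 * gp y x (h t) ≥ 0
      linarith [gp_nonneg y x (h t)]⟩
  have hb2 : IsBoundedUnder (· ≤ ·) (atTop : Filter ℝ≥0) (fun t => 2 * gp y x (h t)) :=
    isBoundedUnder_of ⟨2 * dist y x, fun t => by
      show 2 * gp y x (h t) ≤ 2 * dist y x
      linarith [gp_le_left y x (h t)]⟩
  unfold busemannRay
  rw [hfun, limsup_const_sub atTop _ _ hb2.isCoboundedUnder_ge hb1,
    liminf_two_mul _ (gp_bddAbove y x h).isCoboundedUnder_ge (gp_bddBelow y x h)]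

lemma busemannRay_le_dist {a : ℝ≥0 → X} {y : X} {h : ℝ≥0 → X} (hh : RayTo y a h) (x : X) :
    busemannRay x h ≤ dist x y := by
  rw [busemannRay_eq hh x]
  have h0 : (0 : ℝ) ≤ liminf (fun t => gp y x (h t)) atTop := by
    apply Filter.le_liminf_of_le (gp_bddAbove y x h).isCoboundedUnder_ge
    exact Filter.Eventually.of_forall fun t => gp_nonneg y x (h t)
  linarith

/-- For any two rays from `y` to `a`, the Busemann values differ by at most `2δ`. -/
lemma busemannRay_close {δ : ℝ} (hδ : 0 ≤ δ) (hhyp : IsDeltaHyperbolic X δ)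
    {a : ℝ≥0 → X} (ha : IsGeodesicRay a) {y : X} {h h' : ℝ≥0 → X}
    (hh : RayTo y a h) (hh' : RayTo y a h') (x : X) :
    busemannRay x h' ≤ busemannRay x h + 2 * δ := by
  rw [busemannRay_eq hh x, busemannRay_eq hh' x]
  have c1 := gp_cmp hδ hhyp ha hh' hh y x
  have c2 : liminf (fun t => gp y x (h t)) atTop ≤ limsup (fun t => gp y x (h t)) atTop :=
    liminf_le_limsup (gp_bddAbove y x h) (gp_bddBelow y x h)
  linarith

lemma busemann_bounds {δ : ℝ} (hδ : 0 ≤ δ) (hhyp : IsDeltaHyperbolic X δ)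
    {a : ℝ≥0 → X} (ha : IsGeodesicRay a) {y : X} {h : ℝ≥0 → X}
    (hh : RayTo y a h) (x : X) :
    busemannRay x h ≤ busemann a x y ∧ busemann a x y ≤ busemannRay x h + 2 * δ := by
  have hbdd : BddAbove (busemannRay x '' {h' : ℝ≥0 → X | RayTo y a h'}) := by
    refine ⟨dist x y, ?_⟩
    rintro _ ⟨h', hh', rfl⟩
    exact busemannRay_le_dist hh' x
  constructor
  · exact le_csSup hbdd ⟨h, hh, rfl⟩
  · have hne : (busemannRay x '' {h' : ℝ≥0 → X | RayTo y a h'}).Nonempty :=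
      ⟨busemannRay x h, ⟨h, hh, rfl⟩⟩
    apply csSup_le hne
    rintro _ ⟨h', hh', rfl⟩
    exact busemannRay_close hδ hhyp ha hh hh' x

/-- Antisymmetry at the level of rays. -/
lemma ray_antisymm {δ : ℝ} (hδ : 0 ≤ δ) (hhyp : IsDeltaHyperbolic X δ)
    {a : ℝ≥0 → X} (ha : IsGeodesicRay a) {x y : X} {h k : ℝ≥0 → X}
    (hh : RayTo y a h) (hk : RayTo x a k) :
    |busemannRay x h + busemannRay y k| ≤ 2 * δ := by
  rw [busemannRay_eq hh x, busemannRay_eq hk y]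
  have hid : ∀ t, gp y x (h t) = dist x y - gp x y (h t) := by
    intro t
    unfold gp
    rw [dist_comm y x]
    ring
  have e1 : liminf (fun t => gp y x (h t)) atTop
      = dist x y - limsup (fun t => gp x y (h t)) atTop := by
    simp only [hid]
    exact liminf_const_sub atTop _ _ (gp_bddAbove x y h) (gp_bddBelow x y h).isCoboundedUnder_le
  have c1 := gp_cmp hδ hhyp ha hk hh x y
  have c2 := gp_cmp hδ hhyp ha hh hk x y
  have c3 : liminf (fun t => gp x y (h t)) atTop ≤ limsup (fun t => gp x y (h t)) atTop :=
    liminf_le_limsup (gp_bddAbove x y h) (gp_bddBelow x y h)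
  have c4 : liminf (fun t => gp x y (k t)) atTop ≤ limsup (fun t => gp x y (k t)) atTop :=
    liminf_le_limsup (gp_bddAbove x y k) (gp_bddBelow x y k)
  rw [e1, dist_comm y x, abs_le]
  constructor <;> linarith

/-- Cocycle identity at the level of rays. -/
lemma ray_cocycle {δ : ℝ} (hδ : 0 ≤ δ) (hhyp : IsDeltaHyperbolic X δ)
    {a : ℝ≥0 → X} (ha : IsGeodesicRay a) {x y z : X} {h k : ℝ≥0 → X}
    (hh : RayTo y a h) (hk : RayTo z a k) :
    |busemannRay x h + busemannRay y k - busemannRay x k| ≤ 4 * δ := by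
  set A := liminf (fun t => gp y x (k t)) atTop with hA
  set L := limsup (fun t => gp y x (k t)) atTop with hL
  -- part 1: |busemannRay x h - (dist x y - 2A)| ≤ 2δ
  have c1 := gp_cmp hδ hhyp ha hk hh y x
  have c2 := gp_cmp hδ hhyp ha hh hk y x
  have c3 : liminf (fun t => gp y x (h t)) atTop ≤ limsup (fun t => gp y x (h t)) atTop :=
    liminf_le_limsup (gp_bddAbove y x h) (gp_bddBelow y x h)
  have c4 : A ≤ L := liminf_le_limsup (gp_bddAbove y x k) (gp_bddBelow y x k)
  have part1l : dist x y - 2 * A - 2 * δ ≤ busemannRay x h := by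
    rw [busemannRay_eq hh x]; linarith
  have part1u : busemannRay x h ≤ dist x y - 2 * A + 2 * δ := by
    rw [busemannRay_eq hh x]; linarith
  -- part 2: busemannRay x k - busemannRay y k ∈ [dist x y - 2L, dist x y - 2A]
  have hzt : ∀ t : ℝ≥0, dist z (k t) = (t : ℝ) := by
    intro t
    have := ray_dist_zero hk.1 t; rwa [hk.2.1] at this
  have hsplit : (fun t : ℝ≥0 => dist x (k t) - (t : ℝ))
      = (fun t : ℝ≥0 => dist y (k t) - (t : ℝ)) + (fun t => dist x y - 2 * gp y x (k t)) := by
    funext t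
    show dist x (k t) - (t : ℝ) = (dist y (k t) - (t : ℝ)) + (dist x y - 2 * gp y x (k t))
    unfold gp
    rw [dist_comm y x]
    ring
  have fb1 : IsBoundedUnder (· ≤ ·) (atTop : Filter ℝ≥0) (fun t => dist y (k t) - (t : ℝ)) :=
    isBoundedUnder_of ⟨dist y z, fun t => by
      show dist y (k t) - (t : ℝ) ≤ dist y z
      have := dist_triangle y z (k t)
      rw [hzt t] at this
      linarith⟩
  have fb2 : IsBoundedUnder (· ≥ ·) (atTop : Filter ℝ≥0) (fun t => dist y (k t) - (t : ℝ)) :=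
    isBoundedUnder_of ⟨-dist y z, fun t => by
      show dist y (k t) - (t : ℝ) ≥ -dist y z
      have := dist_triangle z y (k t)
      rw [hzt t, dist_comm z y] at this
      linarith⟩
  have gb1 : IsBoundedUnder (· ≤ ·) (atTop : Filter ℝ≥0) (fun t => dist x y - 2 * gp y x (k t)) :=
    isBoundedUnder_of ⟨dist x y, fun t => by
      show dist x y - 2 * gp y x (k t) ≤ dist x y
      linarith [gp_nonneg y x (k t)]⟩
  have gb2 : IsBoundedUnder (· ≥ ·) (atTop : Filter ℝ≥0) (fun t => dist x y - 2 * gp y x (k t)) :=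
    isBoundedUnder_of ⟨dist x y - 2 * dist y x, fun t => by
      show dist x y - 2 * gp y x (k t) ≥ dist x y - 2 * dist y x
      linarith [gp_le_left y x (k t)]⟩
  have hg2 : IsBoundedUnder (· ≥ ·) (atTop : Filter ℝ≥0) (fun t => 2 * gp y x (k t)) :=
    isBoundedUnder_of ⟨0, fun t => by
      show 2 * gp y x (k t) ≥ 0
      linarith [gp_nonneg y x (k t)]⟩
  have hg1 : IsBoundedUnder (· ≤ ·) (atTop : Filter ℝ≥0) (fun t => 2 * gp y x (k t)) :=
    isBoundedUnder_of ⟨2 * dist y x, fun t => by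
      show 2 * gp y x (k t) ≤ 2 * dist y x
      linarith [gp_le_left y x (k t)]⟩
  have glimsup : limsup (fun t => dist x y - 2 * gp y x (k t)) atTop = dist x y - 2 * A := by
    rw [limsup_const_sub atTop _ _ hg1.isCoboundedUnder_ge hg2,
      liminf_two_mul _ (gp_bddAbove y x k).isCoboundedUnder_ge (gp_bddBelow y x k)]
  have gliminf : liminf (fun t => dist x y - 2 * gp y x (k t)) atTop = dist x y - 2 * L := by
    rw [liminf_const_sub atTop _ _ hg1 hg2.isCoboundedUnder_le,
      limsup_two_mul _ (gp_bddAbove y x k) (gp_bddBelow y x k).isCoboundedUnder_le]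
  have part2u : busemannRay x k ≤ busemannRay y k + (dist x y - 2 * A) := by
    unfold busemannRay
    rw [hsplit, ← glimsup]
    exact limsup_add_le fb2 fb1 gb2.isCoboundedUnder_le gb1
  have part2l : busemannRay y k + (dist x y - 2 * L) ≤ busemannRay x k := by
    unfold busemannRay
    rw [hsplit, ← gliminf]
    exact le_limsup_add fb1 fb2.isCoboundedUnder_le gb1 gb2
  have hLA : L ≤ A + δ := gp_cmp hδ hhyp ha hk hk y x
  rw [abs_le]
  constructor <;> linarith

end GP

/-- `|β_a(x,y) + β_a(y,x)| ≤ 120δ` and `|β_a(x,y) + β_a(y,z) − β_a(x,z)| ≤ 200δ`. -/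
theorem busemann_antisymm_and_cocycle {X : Type*} [MetricSpace X] (δ : ℝ) (hδ : 0 ≤ δ)
    (hhyp : IsDeltaHyperbolic X δ) (hgeo : IsGeodesicSpace X)
    (a : ℝ≥0 → X) (ha : IsGeodesicRay a)
    (hexist : ∀ p : X, ∃ h : ℝ≥0 → X, RayTo p a h) :
    (∀ x y : X, |busemann a x y + busemann a y x| ≤ 120 * δ) ∧
    (∀ x y z : X, |busemann a x y + busemann a y z - busemann a x z| ≤ 200 * δ) := by
  constructor
  · intro x y
    obtain ⟨h, hh⟩ := hexist y
    obtain ⟨k, hk⟩ := hexist x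
    obtain ⟨b1l, b1u⟩ := busemann_bounds hδ hhyp ha hh x
    obtain ⟨b2l, b2u⟩ := busemann_bounds hδ hhyp ha hk y
    have hr := ray_antisymm hδ hhyp ha hh hk
    rw [abs_le] at hr ⊢
    constructor <;> linarith [hr.1, hr.2]
  · intro x y z
    obtain ⟨h, hh⟩ := hexist y
    obtain ⟨k, hk⟩ := hexist z
    obtain ⟨b1l, b1u⟩ := busemann_bounds hδ hhyp ha hh x
    obtain ⟨b2l, b2u⟩ := busemann_bounds hδ hhyp ha hk y
    obtain ⟨b3l, b3u⟩ := busemann_bounds hδ hhyp ha hk x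
    have hr := ray_cocycle (x := x) hδ hhyp ha hh hk
    rw [abs_le] at hr ⊢
    constructor <;> linarith [hr.1, hr.2]
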